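/- Let b ∈ (0,1) and define η[0] = 1 and η[r] = 1/r for r ≥ 1. If t ≥ t₀ := (2/log₂(1/b))·log₂(2/log₂(1/b)), then Σ_{r=0}^{t−1} η[r] b^{t−r} ≤ 4/((1−b)t). -/

import Mathlib

open Finset

noncomputable def eta : ℕ → ℝ := fun r => if r = 0 then 1 else 1 / r

section helpers

lemma geo0 (b : ℝ) (hb0 : 0 ≤ b) (hb1 : b < 1) (n : ℕ) :
    ∑ i ∈ range n, b ^ i ≤ 1 / (1 - b) := by
  have h1 : 0 < 1 - b := by linarith
  have h2 : ∑ i ∈ range n, b ^ i = (1 - b ^ n) / (1 - b) := by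
    rw [geom_sum_eq (ne_of_lt hb1) n, ← neg_div_neg_eq]
    ring_nf
  rw [h2]
  have hbn : 0 ≤ b ^ n := pow_nonneg hb0 n
  gcongr
  linarith

lemma geoIco (b : ℝ) (hb0 : 0 < b) (hb1 : b < 1) (t p q : ℕ) (hqt : q ≤ t) :
    ∑ r ∈ Ico p q, b ^ (t - r) ≤ b ^ (t - q + 1) / (1 - b) := by
  have h1 : 0 < 1 - b := by linarith
  calc ∑ r ∈ Ico p q, b ^ (t - r)
      = ∑ r ∈ Ico p q, b ^ (t - q + 1) * b ^ (q - 1 - r) := by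
        apply sum_congr rfl
        intro r hr
        rw [← pow_add]
        congr 1
        simp only [mem_Ico] at hr
        omega
    _ = b ^ (t - q + 1) * ∑ r ∈ Ico p q, b ^ (q - 1 - r) := by rw [mul_sum]
    _ ≤ b ^ (t - q + 1) * (1 / (1 - b)) := by
        apply mul_le_mul_of_nonneg_left _ (by positivity)
        calc ∑ r ∈ Ico p q, b ^ (q - 1 - r)
            = ∑ i ∈ (Ico p q).image (fun r => q - 1 - r), b ^ i := by
              rw [sum_image]
              intro x hx y hy hxy
              simp only [coe_Ico, Set.mem_Ico, mem_coe, mem_Ico] at hx hy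
              beta_reduce at hxy
              omega
          _ ≤ ∑ i ∈ range q, b ^ i := by
              apply sum_le_sum_of_subset_of_nonneg
              · intro i hi
                simp only [mem_image, mem_Ico] at hi
                obtain ⟨r, hr, hri⟩ := hi
                simp only [mem_range]
                omega
              · intro i _ _
                positivity
          _ ≤ 1 / (1 - b) := geo0 b hb0.le hb1 q
    _ = b ^ (t - q + 1) / (1 - b) := by ring

lemma hyp_conv (b : ℝ) (hb0 : 0 < b) (hb1 : b < 1) (t : ℝ)
    (ht0 : (2 / Real.logb 2 (1 / b)) * Real.logb 2 (2 / Real.logb 2 (1 / b)) ≤ t) :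
    b ^ (t / 2) ≤ Real.logb 2 (1 / b) / 2 := by
  set c := Real.logb 2 (1 / b) with hc
  have hbinv : 1 < 1 / b := one_lt_one_div hb0 hb1
  have hcpos : 0 < c := Real.logb_pos one_lt_two hbinv
  have h2 : Real.logb 2 (2 / c) ≤ c * t / 2 := by
    have h := mul_le_mul_of_nonneg_left ht0 (le_of_lt (by positivity : (0:ℝ) < c / 2))
    have heq : c / 2 * (2 / c * Real.logb 2 (2 / c)) = Real.logb 2 (2 / c) := by
      field_simp
    linarith [heq ▸ h]
  have h3 : (2:ℝ) / c ≤ 2 ^ (c * t / 2) := by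
    calc (2:ℝ) / c = 2 ^ (Real.logb 2 (2 / c)) :=
          (Real.rpow_logb two_pos (by norm_num) (by positivity)).symm
      _ ≤ 2 ^ (c * t / 2) := Real.rpow_le_rpow_of_exponent_le one_le_two h2
  have hb2 : b = (2:ℝ) ^ (-c : ℝ) := by
    have : c = -Real.logb 2 b := by rw [hc, one_div, Real.logb_inv]
    rw [this, neg_neg, Real.rpow_logb two_pos (by norm_num) hb0]
  calc b ^ (t / 2) = (2:ℝ) ^ (-(c * t / 2)) := by
        rw [hb2, ← Real.rpow_mul (by norm_num : (0:ℝ) ≤ 2)]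
        try ring_nf
    _ = 1 / 2 ^ (c * t / 2) := by
        rw [Real.rpow_neg (by norm_num : (0:ℝ) ≤ 2), one_div]
    _ ≤ 1 / (2 / c) := one_div_le_one_div_of_le (by positivity) h3
    _ = c / 2 := by field_simp; try ring

lemma decay (b : ℝ) (hb0 : 0 < b) (hb1 : b < 1) (t : ℝ) (ht : 0 < t) :
    t * b ^ (t / 4) ≤ 4 / (Real.exp 1 * Real.log (1 / b)) := by
  set L := Real.log (1 / b) with hL
  have hLpos : 0 < L := Real.log_pos (one_lt_one_div hb0 hb1)
  have hlogb : Real.log b = -L := by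
    rw [hL, one_div, Real.log_inv, neg_neg]
  set u := t * L / 4 with hu
  have hupos : 0 < u := by positivity
  have hkey : u * Real.exp (-u) ≤ 1 / Real.exp 1 := by
    have h1 : u ≤ Real.exp (u - 1) := by
      have := Real.add_one_le_exp (u - 1)
      linarith
    have h2 : Real.exp (u - 1) = Real.exp u / Real.exp 1 := by
      rw [Real.exp_sub]
    have h3 : u * Real.exp (-u) ≤ (Real.exp u / Real.exp 1) * Real.exp (-u) := by
      apply mul_le_mul_of_nonneg_right (h2 ▸ h1) (Real.exp_nonneg _)
    calc u * Real.exp (-u) ≤ (Real.exp u / Real.exp 1) * Real.exp (-u) := h3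
      _ = 1 / Real.exp 1 := by
          rw [Real.exp_neg]
          field_simp
  have hbt : b ^ (t / 4) = Real.exp (-u) := by
    rw [Real.rpow_def_of_pos hb0, hlogb, hu]
    ring_nf
  rw [hbt]
  have heq : t * Real.exp (-u) = (4 / L) * (u * Real.exp (-u)) := by
    rw [hu]; field_simp
  rw [heq]
  calc (4 / L) * (u * Real.exp (-u)) ≤ (4 / L) * (1 / Real.exp 1) :=
        mul_le_mul_of_nonneg_left hkey (by positivity)
    _ = 4 / (Real.exp 1 * L) := by
        field_simp

lemma polycore (w : ℝ) (hw0 : 0 < w) (hw1 : w < 1) :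
    2 * w ^ 8 + (2309/100) * w ^ 3 - (2309/100) * w ^ 4 ≤ 2938/1000 := by
  nlinarith [sq_nonneg (w - 72/100), sq_nonneg (w^2 - 52/100), sq_nonneg (w^3 - 38/100), sq_nonneg (w^4 - 27/100), mul_nonneg (sub_nonneg.2 hw1.le) hw0.le, mul_nonneg (mul_nonneg hw0.le hw0.le) hw0.le, sq_nonneg (w^4 - w^3), mul_nonneg (sub_nonneg.2 hw1.le) (pow_nonneg hw0.le 3), mul_nonneg (sub_nonneg.2 hw1.le) (pow_nonneg hw0.le 6), sq_nonneg ((1-w)*w^3)]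

lemma polybound (w : ℝ) (hw0 : 0 < w) (hw1 : w < 1) :
    2 * w ^ 8 + 16 * (w ^ 3 * (1 - w)) / Real.log 2 + 2 / (Real.exp 1 * Real.log 2) ≤ 4 := by
  have hlog2 : (0.6931471803 : ℝ) < Real.log 2 := Real.log_two_gt_d9
  have he : (2.7182818283 : ℝ) < Real.exp 1 := Real.exp_one_gt_d9
  have hXnn : (0:ℝ) ≤ w ^ 3 * (1 - w) := by nlinarith [pow_nonneg hw0.le 3]
  have h1 : 16 * (w ^ 3 * (1 - w)) / Real.log 2 ≤ (2309/100) * (w ^ 3 * (1 - w)) := by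
    rw [div_le_iff₀ (by linarith)]
    nlinarith
  have h2 : 2 / (Real.exp 1 * Real.log 2) ≤ 1062/1000 := by
    rw [div_le_iff₀ (by nlinarith)]
    nlinarith
  have h3 := polycore w hw0 hw1
  nlinarith

end helpers

theorem stmt10 (b : ℝ) (hb : b ∈ Set.Ioo (0 : ℝ) 1) (t : ℕ) (ht : 0 < t)
    (ht0 : (2 / Real.logb 2 (1 / b)) * Real.logb 2 (2 / Real.logb 2 (1 / b)) ≤ (t : ℝ)) :
    ∑ r ∈ Finset.range t, eta r * b ^ (t - r) ≤ 4 / ((1 - b) * t) := by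
  obtain ⟨hb0, hb1⟩ := hb
  have h1b : 0 < 1 - b := by linarith
  have htR : (0:ℝ) < t := by exact_mod_cast ht
  set c := Real.logb 2 (1/b) with hc
  have hbinv : 1 < 1 / b := one_lt_one_div hb0 hb1
  have hcpos : 0 < c := Real.logb_pos one_lt_two hbinv
  have H : b ^ ((t:ℝ)/2) ≤ c/2 := hyp_conv b hb0 hb1 t ht0
  set m : ℕ := (t+1)/2 with hm
  set m' : ℕ := (m+1)/2 with hm'
  have hm1 : 1 ≤ m := by omega
  have hm'1 : 1 ≤ m' := by omega
  have hm'm : m' ≤ m := by omega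
  have hmt : m ≤ t := by omega
  have hmR : (0:ℝ) < m := by exact_mod_cast hm1
  have hm'R : (0:ℝ) < m' := by exact_mod_cast hm'1
  -- eta facts
  have heta1 : ∀ r : ℕ, eta r ≤ 1 := by
    intro r
    unfold eta
    by_cases hr : r = 0
    · simp [hr]
    · simp only [hr, if_false]
      rw [div_le_one (by exact_mod_cast Nat.pos_of_ne_zero hr)]
      exact_mod_cast Nat.one_le_iff_ne_zero.2 hr
  have heta2 : ∀ k r : ℕ, 1 ≤ k → k ≤ r → eta r ≤ 1 / (k:ℝ) := by
    intro k r hk hkr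
    unfold eta
    have hr0 : r ≠ 0 := by omega
    simp only [hr0, if_false]
    apply one_div_le_one_div_of_le (by exact_mod_cast hk)
    exact_mod_cast hkr
  -- split the sum
  have hsplit : ∑ r ∈ range t, eta r * b ^ (t - r)
      = (∑ r ∈ Ico 0 m', eta r * b ^ (t - r)) + (∑ r ∈ Ico m' m, eta r * b ^ (t - r))
        + (∑ r ∈ Ico m t, eta r * b ^ (t - r)) := by
    rw [range_eq_Ico, ← sum_Ico_consecutive _ (Nat.zero_le m) hmt,
        ← sum_Ico_consecutive _ (Nat.zero_le m') hm'm]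
  -- block bounds
  have E3 : ∑ r ∈ Ico 0 m', eta r * b ^ (t - r) ≤ b ^ (t - m' + 1) / (1 - b) := by
    calc ∑ r ∈ Ico 0 m', eta r * b ^ (t - r) ≤ ∑ r ∈ Ico 0 m', b ^ (t - r) := by
          apply sum_le_sum
          intro r _
          have := mul_le_mul_of_nonneg_right (heta1 r) (by positivity : (0:ℝ) ≤ b ^ (t - r))
          linarith [this]
      _ ≤ b ^ (t - m' + 1) / (1 - b) := geoIco b hb0 hb1 t 0 m' (by omega)
  have E2 : ∑ r ∈ Ico m' m, eta r * b ^ (t - r) ≤ (1/(m':ℝ)) * (b ^ (t - m + 1) / (1 - b)) := by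
    calc ∑ r ∈ Ico m' m, eta r * b ^ (t - r) ≤ ∑ r ∈ Ico m' m, (1/(m':ℝ)) * b ^ (t - r) := by
          apply sum_le_sum
          intro r hr
          exact mul_le_mul_of_nonneg_right (heta2 m' r hm'1 (mem_Ico.1 hr).1) (by positivity)
      _ = (1/(m':ℝ)) * ∑ r ∈ Ico m' m, b ^ (t - r) := by rw [mul_sum]
      _ ≤ (1/(m':ℝ)) * (b ^ (t - m + 1) / (1 - b)) :=
          mul_le_mul_of_nonneg_left (geoIco b hb0 hb1 t m' m hmt) (by positivity)
  have E1 : ∑ r ∈ Ico m t, eta r * b ^ (t - r) ≤ (1/(m:ℝ)) * (b / (1 - b)) := by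
    calc ∑ r ∈ Ico m t, eta r * b ^ (t - r) ≤ ∑ r ∈ Ico m t, (1/(m:ℝ)) * b ^ (t - r) := by
          apply sum_le_sum
          intro r hr
          exact mul_le_mul_of_nonneg_right (heta2 m r hm1 (mem_Ico.1 hr).1) (by positivity)
      _ = (1/(m:ℝ)) * ∑ r ∈ Ico m t, b ^ (t - r) := by rw [mul_sum]
      _ ≤ (1/(m:ℝ)) * (b ^ (t - t + 1) / (1 - b)) :=
          mul_le_mul_of_nonneg_left (geoIco b hb0 hb1 t m t le_rfl) (by positivity)
      _ = (1/(m:ℝ)) * (b / (1 - b)) := by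
          congr 2
          have : t - t + 1 = 1 := by omega
          rw [this, pow_one]
  -- main numeric bound
  have main : (t:ℝ) * b ^ (t - m' + 1) + 4 * b ^ (t - m + 1) + 2 * b ≤ 4 := by
    have hl2 : 0 < Real.log 2 := Real.log_pos one_lt_two
    set L := Real.log (1/b) with hL
    have hLpos : 0 < L := Real.log_pos hbinv
    have hcL : c = L / Real.log 2 := by rw [hc, Real.logb, hL]
    have hA : 3*(t:ℝ)/4 ≤ ((t - m' + 1 : ℕ):ℝ) := by
      have h : 3*t ≤ 4*(t - m' + 1) := by omega
      have h' : (3*(t:ℝ)) ≤ 4*((t - m' + 1 : ℕ):ℝ) := by exact_mod_cast h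
      linarith
    have hB : ((t:ℝ)+1)/2 ≤ ((t - m + 1 : ℕ):ℝ) := by
      have h : t + 1 ≤ 2*(t - m + 1) := by omega
      have h' : ((t:ℝ)+1) ≤ 2*((t - m + 1 : ℕ):ℝ) := by exact_mod_cast h
      linarith
    have r1 : b ^ (t - m' + 1) = b ^ (((t - m' + 1 : ℕ)):ℝ) := (Real.rpow_natCast b _).symm
    have r2 : b ^ (t - m + 1) = b ^ (((t - m + 1 : ℕ)):ℝ) := (Real.rpow_natCast b _).symm
    have s1 : b ^ (((t - m' + 1 : ℕ)):ℝ) ≤ b ^ (3*(t:ℝ)/4) :=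
      Real.rpow_le_rpow_of_exponent_ge hb0 hb1.le hA
    have s2 : b ^ (((t - m + 1 : ℕ)):ℝ) ≤ b ^ (((t:ℝ)+1)/2) :=
      Real.rpow_le_rpow_of_exponent_ge hb0 hb1.le hB
    have split1 : b ^ (3*(t:ℝ)/4) = b ^ ((t:ℝ)/4) * b ^ ((t:ℝ)/2) := by
      rw [← Real.rpow_add hb0]
      ring_nf
    have split2 : b ^ (((t:ℝ)+1)/2) = b ^ ((1:ℝ)/2) * b ^ ((t:ℝ)/2) := by
      rw [← Real.rpow_add hb0]
      ring_nf
    have ht3 : (t:ℝ) * b ^ (t - m' + 1) ≤ 2 / (Real.exp 1 * Real.log 2) := by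
      calc (t:ℝ) * b ^ (t - m' + 1) ≤ (t:ℝ) * (b ^ ((t:ℝ)/4) * b ^ ((t:ℝ)/2)) := by
            rw [r1]
            exact mul_le_mul_of_nonneg_left (split1 ▸ s1) htR.le
        _ = ((t:ℝ) * b ^ ((t:ℝ)/4)) * b ^ ((t:ℝ)/2) := by ring
        _ ≤ (4/(Real.exp 1 * L)) * (c/2) := by
            apply mul_le_mul (decay b hb0 hb1 t htR) H
              (Real.rpow_nonneg hb0.le _) (by positivity)
        _ = 2/(Real.exp 1 * Real.log 2) := by
            rw [hcL]
            field_simp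
            ring
    have ht2 : 4 * b ^ (t - m + 1) ≤ 2 * b ^ ((1:ℝ)/2) * c := by
      calc 4 * b ^ (t - m + 1) ≤ 4 * (b ^ ((1:ℝ)/2) * b ^ ((t:ℝ)/2)) := by
            rw [r2]
            exact mul_le_mul_of_nonneg_left (split2 ▸ s2) (by norm_num)
        _ ≤ 4 * (b ^ ((1:ℝ)/2) * (c/2)) := by
            apply mul_le_mul_of_nonneg_left _ (by norm_num)
            exact mul_le_mul_of_nonneg_left H (Real.rpow_nonneg hb0.le _)
        _ = 2 * b ^ ((1:ℝ)/2) * c := by ring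
    set w := b ^ ((1:ℝ)/8) with hw
    have hw0 : 0 < w := Real.rpow_pos_of_pos hb0 _
    have hw1 : w < 1 := Real.rpow_lt_one hb0.le hb1 (by norm_num)
    have hbw : b = w ^ 8 := by
      rw [hw, ← Real.rpow_natCast (b ^ ((1:ℝ)/8)) 8, ← Real.rpow_mul hb0.le]
      norm_num
    have hsq : b ^ ((1:ℝ)/2) = w ^ 4 := by
      rw [hw, ← Real.rpow_natCast (b ^ ((1:ℝ)/8)) 4, ← Real.rpow_mul hb0.le]
      norm_num
    have hLw : L ≤ 8 * ((1 - w) / w) := by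
      have h1 : Real.log w⁻¹ ≤ w⁻¹ - 1 := Real.log_le_sub_one_of_pos (by positivity)
      have h3 : Real.log w⁻¹ = - Real.log w := Real.log_inv w
      have h2 : L = 8 * (-Real.log w) := by
        rw [hL, one_div, Real.log_inv, hbw, Real.log_pow]
        push_cast
        ring
      have h5 : -Real.log w ≤ (1-w)/w := by
        rw [← h3]
        calc Real.log w⁻¹ ≤ w⁻¹ - 1 := h1
          _ = (1-w)/w := by field_simp
      calc L = 8 * (-Real.log w) := h2
        _ ≤ 8 * ((1-w)/w) := by linarith
    have ht2' : 2 * b ^ ((1:ℝ)/2) * c ≤ 16 * (w^3 * (1-w)) / Real.log 2 := by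
      rw [hsq, hcL]
      have hnum : 2 * w^4 * L ≤ 16 * (w^3*(1-w)) := by
        have h6 := mul_le_mul_of_nonneg_left hLw (by positivity : (0:ℝ) ≤ 2 * w^4)
        have h7 : 2*w^4*(8*((1-w)/w)) = 16*(w^3*(1-w)) := by
          field_simp
          ring
        linarith
      calc 2 * w^4 * (L/Real.log 2) = (2*w^4*L)/Real.log 2 := by ring
        _ ≤ 16*(w^3*(1-w))/Real.log 2 := by gcongr
    have h2b : 2*b = 2*w^8 := by rw [hbw]
    have hpoly := polybound w hw0 hw1
    have hfinal := ht2.trans ht2'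
    linarith
  -- finish
  have hfin : b ^ (t - m' + 1) / (1 - b) + (1/(m':ℝ)) * (b ^ (t - m + 1) / (1 - b))
      + (1/(m:ℝ)) * (b / (1 - b)) ≤ 4 / ((1 - b) * t) := by
    rw [le_div_iff₀ (by positivity : (0:ℝ) < (1 - b) * t)]
    have expand : (b ^ (t - m' + 1) / (1 - b) + (1/(m':ℝ)) * (b ^ (t - m + 1) / (1 - b))
        + (1/(m:ℝ)) * (b / (1 - b))) * ((1 - b) * t)
        = (t:ℝ) * b ^ (t - m' + 1) + ((t:ℝ)/m') * b ^ (t - m + 1) + ((t:ℝ)/m) * b := by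
      field_simp
    rw [expand]
    have ht2m : (t:ℝ) ≤ 2 * m := by
      have : t ≤ 2 * m := by omega
      exact_mod_cast this
    have ht4m' : (t:ℝ) ≤ 4 * m' := by
      have : t ≤ 4 * m' := by omega
      exact_mod_cast this
    have T1 : ((t:ℝ)/m) * b ≤ 2 * b := by
      apply mul_le_mul_of_nonneg_right _ hb0.le
      rw [div_le_iff₀ hmR]
      linarith
    have T2 : ((t:ℝ)/m') * b ^ (t - m + 1) ≤ 4 * b ^ (t - m + 1) := by
      apply mul_le_mul_of_nonneg_right _ (by positivity)
      rw [div_le_iff₀ hm'R]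
      linarith
    linarith
  calc ∑ r ∈ range t, eta r * b ^ (t - r)
      = _ := hsplit
    _ ≤ b ^ (t - m' + 1) / (1 - b) + (1/(m':ℝ)) * (b ^ (t - m + 1) / (1 - b))
        + (1/(m:ℝ)) * (b / (1 - b)) := by linarith
    _ ≤ 4 / ((1 - b) * t) := hfin
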